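/- Let M be a perfect matching of a graph G and let S be a set of edges of G with S ∩ M = ∅. Then S is an anti-forcing set of M if and only if S contains at least one edge of every M-alternating cycle of G. -/

import Mathlib

/-- `M` is a perfect matching of `G`, regarded as a set of edges: every edge of `M` is an
edge of `G` and every vertex lies in exactly one edge of `M`. -/
def IsPM {V : Type*} (G : SimpleGraph V) (M : Set (Sym2 V)) : Prop :=
  M ⊆ G.edgeSet ∧ ∀ w : V, ∃! e, e ∈ M ∧ w ∈ e

/-- A graph is matchable if it has a perfect matching. -/
def Matchable {V : Type*} (G : SimpleGraph V) : Prop :=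
  ∃ M, IsPM G M

/-- A global forcing set of `G`: a set `S` of edges of `G` distinguishing all
perfect matchings of `G`. -/
def IsGlobalForcingSet {V : Type*} (G : SimpleGraph V) (S : Set (Sym2 V)) : Prop :=
  S ⊆ G.edgeSet ∧
    ∀ M₁ M₂, IsPM G M₁ → IsPM G M₂ → M₁ ≠ M₂ → S ∩ M₁ ≠ S ∩ M₂

/-- The global forcing number: the minimum cardinality of a global forcing set. -/
noncomputable def gf {V : Type*} (G : SimpleGraph V) : ℕ :=
  sInf {n | ∃ S, IsGlobalForcingSet G S ∧ S.ncard = n}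

/-- An anti-forcing set of a perfect matching `M` of `G`: a set `S` of edges of `G`
disjoint from `M` such that `M` is the unique perfect matching of `G - S`. -/
def IsAntiForcingSet {V : Type*} (G : SimpleGraph V) (M S : Set (Sym2 V)) : Prop :=
  S ⊆ G.edgeSet ∧ S ∩ M = ∅ ∧ IsPM (G.deleteEdges S) M ∧
    ∀ M', IsPM (G.deleteEdges S) M' → M' = M

/-- The anti-forcing number of a perfect matching `M` of `G`. -/
noncomputable def af {V : Type*} (G : SimpleGraph V) (M : Set (Sym2 V)) : ℕ :=
  sInf {n | ∃ S, IsAntiForcingSet G M S ∧ S.ncard = n}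

/-- The maximum anti-forcing number of `G`. -/
noncomputable def Af {V : Type*} (G : SimpleGraph V) : ℕ :=
  sSup {n | ∃ M, IsPM G M ∧ af G M = n}

/-- A cycle `C` of `G` is `M`-alternating: `M` contains a perfect matching of `C`,
i.e. every vertex of `C` lies in exactly one edge of `C` belonging to `M`. -/
def IsAltCycle {V : Type*} (G : SimpleGraph V) (M : Set (Sym2 V)) {a : V}
    (C : G.Walk a a) : Prop :=
  C.IsCycle ∧ ∀ w ∈ C.support, ∃! e, e ∈ C.edges ∧ e ∈ M ∧ w ∈ e


lemma IsPM.partner {V : Type*} {G : SimpleGraph V} {M : Set (Sym2 V)}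
    (hM : IsPM G M) :
    ∃ p : V → V, (∀ w, G.Adj w (p w)) ∧ (∀ w, p (p w) = w) ∧
      (∀ w, s(w, p w) ∈ M) ∧ (∀ w e, e ∈ M → w ∈ e → e = s(w, p w)) := by
  classical
  choose e he hu using fun w => (hM.2 w)
  have hmem : ∀ w, s(w, Sym2.Mem.other (he w).2) ∈ M := by
    intro w; rw [Sym2.other_spec (he w).2]; exact (he w).1
  refine ⟨fun w => Sym2.Mem.other (he w).2, ?_, ?_, ?_, ?_⟩
  · intro w
    exact (G.mem_edgeSet).1 (hM.1 (hmem w))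
  · intro w
    set pw := Sym2.Mem.other (he w).2 with hpw
    have e1 : s(w, pw) = e pw := hu pw _ ⟨hmem w, Sym2.mem_mk_right _ _⟩
    have e2 : s(pw, Sym2.Mem.other (he pw).2) = e pw := Sym2.other_spec (he pw).2
    have : s(pw, Sym2.Mem.other (he pw).2) = s(pw, w) := by
      rw [e2, ← e1, Sym2.eq_swap]
    exact Sym2.congr_right.mp this
  · exact hmem
  · intro w f hf hwf
    rw [hu w f ⟨hf, hwf⟩, Sym2.other_spec (he w).2]



lemma edge_unique_at_end {V : Type*} {G : SimpleGraph V} {x w : V}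
    (q : G.Walk x w) (hw : w ∉ q.support.dropLast) :
    ∀ e₁ ∈ q.edges, ∀ e₂ ∈ q.edges, w ∈ e₁ → w ∈ e₂ → e₁ = e₂ := by
  induction q with
  | nil => simp
  | @cons x b w h q ih =>
    have hql : q.support ≠ [] := q.support_ne_nil
    have hdl : (SimpleGraph.Walk.cons h q).support.dropLast = x :: q.support.dropLast := by
      rw [SimpleGraph.Walk.support_cons]
      exact List.dropLast_cons_of_ne_nil hql
    rw [hdl, List.mem_cons, not_or] at hw
    obtain ⟨hwx, hwq⟩ := hw
    intro e₁ he₁ e₂ he₂ hw₁ hw₂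
    rw [SimpleGraph.Walk.edges_cons, List.mem_cons] at he₁ he₂
    by_cases hqn : q.Nil
    · have : q.edges = [] := by
        have hl : q.length = 0 := SimpleGraph.Walk.nil_iff_length_eq.1 hqn
        have := q.length_edges
        rw [hl] at this
        exact List.length_eq_zero_iff.1 this
      rcases he₁ with rfl | h1
      · rcases he₂ with rfl | h2
        · rfl
        · rw [this] at h2; simp at h2
      · rw [this] at h1; simp at h1
    · have hb : b ∈ q.support.dropLast := by
        have hsc : q.support = b :: q.support.tail := q.support_eq_cons
        have ht : q.support.tail ≠ [] := by
          intro hh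
          apply hqn
          rw [SimpleGraph.Walk.nil_iff_length_eq]
          have := congrArg List.length hsc
          rw [hh, SimpleGraph.Walk.length_support] at this
          simp only [List.length_cons, List.length_nil] at this
          omega
        rw [hsc, List.dropLast_cons_of_ne_nil ht]
        exact List.mem_cons_self
      have hhead : w ∉ (s(x, b) : Sym2 V) := by
        intro hh
        rcases Sym2.mem_iff.1 hh with rfl | rfl
        · exact hwx rfl
        · exact hwq hb
      rcases he₁ with rfl | h1
      · exact absurd hw₁ hhead
      · rcases he₂ with rfl | h2
        · exact absurd hw₂ hhead
        · exact ih hwq e₁ h1 e₂ h2 hw₁ hw₂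

lemma cycle_two_edges {V : Type*} {G : SimpleGraph V} {w : V}
    {D : G.Walk w w} (hD : D.IsCycle) :
    ∃ f₁ f₂ : Sym2 V, f₁ ≠ f₂ ∧ f₁ ∈ D.edges ∧ f₂ ∈ D.edges ∧ w ∈ f₁ ∧ w ∈ f₂ ∧
      ∀ e ∈ D.edges, w ∈ e → e = f₁ ∨ e = f₂ := by
  cases D with
  | nil => exact absurd rfl hD.ne_nil
  | @cons _ b _ h p =>
    have hwb : w ≠ b := h.ne
    obtain ⟨y, h₂, r, hrev⟩ := SimpleGraph.Walk.exists_eq_cons_of_ne hwb p.reverse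
    have hp : p = r.reverse.append (SimpleGraph.Walk.cons h₂.symm SimpleGraph.Walk.nil) := by
      have := congrArg SimpleGraph.Walk.reverse hrev
      rw [SimpleGraph.Walk.reverse_reverse] at this
      rw [this, SimpleGraph.Walk.reverse_cons]
    have hpsupp : p.support = r.reverse.support ++ [w] := by
      rw [hp, SimpleGraph.Walk.support_append]
      simp
    have hpedges : s(w, y) ∈ p.edges := by
      rw [hp, SimpleGraph.Walk.edges_append]
      simp [Sym2.eq_swap]
    have hptailnodup : p.support.Nodup := by
      have := hD.support_nodup
      simpa using this
    have hwdl : w ∉ p.support.dropLast := by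
      rw [hpsupp, List.dropLast_concat]
      intro hh
      have := List.nodup_append'.mp (hpsupp ▸ hptailnodup)
      exact this.2.2 hh (List.mem_singleton_self w)
    have hDedges : (SimpleGraph.Walk.cons h p).edges = s(w, b) :: p.edges := rfl
    have hnd : ((s(w, b) : Sym2 V) :: p.edges).Nodup := hDedges ▸ hD.edges_nodup
    have hf1np : (s(w, b) : Sym2 V) ∉ p.edges := (List.nodup_cons.mp hnd).1
    refine ⟨s(w, b), s(w, y), ?_, ?_, ?_, ?_, ?_, ?_⟩
    · intro hh
      exact hf1np (hh ▸ hpedges)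
    · rw [hDedges]; exact List.mem_cons_self
    · rw [hDedges]; exact List.mem_cons_of_mem _ hpedges
    · exact Sym2.mem_mk_left _ _
    · exact Sym2.mem_mk_left _ _
    · intro e he hwe
      rw [hDedges, List.mem_cons] at he
      rcases he with rfl | he
      · exact Or.inl rfl
      · exact Or.inr (edge_unique_at_end p hwdl e he s(w, y) hpedges hwe
          (Sym2.mem_mk_left _ _))


lemma mem_support_of_mem_edges' {V : Type*} {G : SimpleGraph V} {x y w : V}
    (q : G.Walk x y) {e : Sym2 V} (he : e ∈ q.edges) (hw : w ∈ e) :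
    w ∈ q.support := by
  induction e with
  | _ u v =>
    rcases Sym2.mem_iff.1 hw with rfl | rfl
    · exact q.fst_mem_support_of_mem_edges he
    · exact q.snd_mem_support_of_mem_edges he

lemma forward_dir {V : Type*} (G : SimpleGraph V) (M S : Set (Sym2 V))
    (hM : IsPM G M) (hSM : S ∩ M = ∅) (haf : IsAntiForcingSet G M S) :
    ∀ (a : V) (C : G.Walk a a), IsAltCycle G M C → ∃ e ∈ S, e ∈ C.edges := by
  classical
  intro a C hC
  by_contra hcon
  push_neg at hcon
  -- key: at each support vertex, exactly two cycle edges, one in M one not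
  have key : ∀ w ∈ C.support, ∃ g₁ g₂ : Sym2 V, g₁ ≠ g₂ ∧ g₁ ∈ C.edges ∧ g₂ ∈ C.edges ∧
      w ∈ g₁ ∧ w ∈ g₂ ∧ g₁ ∈ M ∧ g₂ ∉ M ∧ ∀ e ∈ C.edges, w ∈ e → e = g₁ ∨ e = g₂ := by
    intro w hw
    obtain ⟨f₁, f₂, hne, hf₁, hf₂, hwf₁, hwf₂, hchar⟩ := cycle_two_edges (hC.1.rotate hw)
    have hrot : ∀ e : Sym2 V, e ∈ (C.rotate w hw).edges ↔ e ∈ C.edges := fun e =>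
      (C.rotate_edges w hw).mem_iff
    rw [hrot] at hf₁ hf₂
    have hchar' : ∀ e ∈ C.edges, w ∈ e → e = f₁ ∨ e = f₂ := by
      intro e he hwe
      exact hchar e ((hrot e).2 he) hwe
    obtain ⟨e₀, ⟨he₀C, he₀M, hwe₀⟩, huniq⟩ := hC.2 w hw
    rcases hchar' e₀ he₀C hwe₀ with rfl | rfl
    · refine ⟨e₀, f₂, hne, he₀C, hf₂, hwe₀, hwf₂, he₀M, ?_, hchar'⟩
      intro hf₂M
      exact hne (huniq f₂ ⟨hf₂, hf₂M, hwf₂⟩).symm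
    · refine ⟨e₀, f₁, hne.symm, he₀C, hf₁, hwe₀, hwf₁, he₀M, ?_, ?_⟩
      · intro hf₁M
        exact hne (huniq f₁ ⟨hf₁, hf₁M, hwf₁⟩)
      · intro e he hwe
        exact (hchar' e he hwe).symm
  set Ce : Set (Sym2 V) := {e | e ∈ C.edges} with hCe
  set M' : Set (Sym2 V) := (M \ Ce) ∪ (Ce \ M) with hM'def
  have hM' : IsPM (G.deleteEdges S) M' := by
    constructor
    · intro e he
      rw [SimpleGraph.edgeSet_deleteEdges]
      rcases he with ⟨heM, -⟩ | ⟨heC, -⟩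
      · refine ⟨hM.1 heM, fun heS => ?_⟩
        have : e ∈ S ∩ M := ⟨heS, heM⟩
        rw [hSM] at this
        exact this
      · exact ⟨C.edges_subset_edgeSet heC, fun heS => hcon e heS heC⟩
    · intro w
      by_cases hw : w ∈ C.support
      · obtain ⟨g₁, g₂, hne, hg₁C, hg₂C, hwg₁, hwg₂, hg₁M, hg₂M, hchar⟩ := key w hw
        refine ⟨g₂, ⟨Or.inr ⟨hg₂C, hg₂M⟩, hwg₂⟩, ?_⟩
        rintro e ⟨he, hwe⟩
        rcases he with ⟨heM, heC⟩ | ⟨heC, heM⟩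
        · exfalso
          have : e = g₁ := by
            have h1 := (hM.2 w).unique ⟨heM, hwe⟩ ⟨hg₁M, hwg₁⟩
            exact h1
          exact heC (this ▸ hg₁C)
        · rcases hchar e heC hwe with rfl | rfl
          · exact absurd hg₁M heM
          · rfl
      · obtain ⟨ew, ⟨hewM, hwew⟩, huniq⟩ := hM.2 w
        have hewC : ew ∉ Ce := fun hh => hw (mem_support_of_mem_edges' C hh hwew)
        refine ⟨ew, ⟨Or.inl ⟨hewM, hewC⟩, hwew⟩, ?_⟩
        rintro e ⟨he, hwe⟩
        rcases he with ⟨heM, -⟩ | ⟨heC, -⟩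
        · exact huniq e ⟨heM, hwe⟩
        · exact absurd (mem_support_of_mem_edges' C heC hwe) hw
  have hMM' : M' = M := haf.2.2.2 M' hM'
  obtain ⟨g₁, g₂, hne, hg₁C, hg₂C, hwg₁, hwg₂, hg₁M, hg₂M, hchar⟩ :=
    key a C.start_mem_support
  have : g₂ ∈ M' := Or.inr ⟨hg₂C, hg₂M⟩
  rw [hMM'] at this
  exact hg₂M this


def buildWalk {V : Type*} {G : SimpleGraph V} (u v : ℕ → V)
    (h1 : ∀ k, G.Adj (u k) (v k)) (h2 : ∀ k, G.Adj (v k) (u (k + 1))) :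
    (k : ℕ) → G.Walk (u 0) (u k)
  | 0 => SimpleGraph.Walk.nil
  | (k + 1) => (buildWalk u v h1 h2 k).append
      (SimpleGraph.Walk.cons (h1 k) (SimpleGraph.Walk.cons (h2 k) SimpleGraph.Walk.nil))

lemma buildWalk_support {V : Type*} {G : SimpleGraph V} (u v : ℕ → V)
    (h1 : ∀ k, G.Adj (u k) (v k)) (h2 : ∀ k, G.Adj (v k) (u (k + 1))) (k : ℕ) :
    (buildWalk u v h1 h2 k).support
      = u 0 :: (List.range k).flatMap (fun j => [v j, u (j + 1)]) := by
  induction k with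
  | zero => simp [buildWalk]
  | succ k ih =>
    rw [buildWalk, SimpleGraph.Walk.support_append, ih, List.range_succ]
    simp

lemma buildWalk_edges {V : Type*} {G : SimpleGraph V} (u v : ℕ → V)
    (h1 : ∀ k, G.Adj (u k) (v k)) (h2 : ∀ k, G.Adj (v k) (u (k + 1))) (k : ℕ) :
    (buildWalk u v h1 h2 k).edges
      = (List.range k).flatMap (fun j => [s(u j, v j), s(v j, u (j + 1))]) := by
  induction k with
  | zero => simp [buildWalk]
  | succ k ih =>
    rw [buildWalk, SimpleGraph.Walk.edges_append, ih, List.range_succ]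
    simp

lemma backward_dir {V : Type*} [Fintype V] (G : SimpleGraph V) (M S : Set (Sym2 V))
    (hM : IsPM G M) (hS : S ⊆ G.edgeSet) (hSM : S ∩ M = ∅)
    (hyp : ∀ (a : V) (C : G.Walk a a), IsAltCycle G M C → ∃ e ∈ S, e ∈ C.edges) :
    IsAntiForcingSet G M S := by
  classical
  have hMS : ∀ e ∈ M, e ∉ S := by
    intro e heM heS
    have : e ∈ S ∩ M := ⟨heS, heM⟩
    rw [hSM] at this
    exact this
  have hMpm' : IsPM (G.deleteEdges S) M := by
    refine ⟨?_, hM.2⟩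
    intro e he
    rw [SimpleGraph.edgeSet_deleteEdges]
    exact ⟨hM.1 he, hMS e he⟩
  refine ⟨hS, hSM, hMpm', ?_⟩
  intro M' hM'pm
  by_contra hne
  obtain ⟨p, hpadj, hpinv, hpM, hpuniq⟩ := hM.partner
  obtain ⟨q, hqadj, hqinv, hqM, hquniq⟩ := hM'pm.partner
  -- q w ≠ w, p w ≠ w
  have hpne : ∀ w, p w ≠ w := fun w => (hpadj w).ne'
  have hqne : ∀ w, q w ≠ w := fun w => (hqadj w).ne'
  -- find a vertex where p and q differ
  have hex_a : ∃ a, p a ≠ q a := by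
    by_contra hno
    push_neg at hno
    apply hne
    ext e
    constructor
    · intro he
      induction e with
      | _ x y =>
        have hx : x ∈ (s(x, y) : Sym2 V) := Sym2.mem_mk_left _ _
        have := hquniq x _ he hx
        rw [this, ← hno x]
        exact hpM x
    · intro he
      induction e with
      | _ x y =>
        have hx : x ∈ (s(x, y) : Sym2 V) := Sym2.mem_mk_left _ _
        have := hpuniq x _ he hx
        rw [this, hno x]
        exact hqM x
  obtain ⟨a, ha⟩ := hex_a
  set g : V → V := p ∘ q with hg
  set g' : V → V := q ∘ p with hg'
  have hcan1 : ∀ x, g (g' x) = x := by intro x; simp [hg, hg', hqinv, hpinv]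
  have hcan2 : ∀ x, g' (g x) = x := by intro x; simp [hg, hg', hqinv, hpinv]
  have hginj : Function.Injective g := Function.LeftInverse.injective hcan2
  -- iterated cancellation
  have hcanit1 : ∀ t x, g^[t] (g'^[t] x) = x := by
    intro t
    induction t with
    | zero => simp
    | succ t ih =>
      intro x
      rw [Function.iterate_succ_apply g', Function.iterate_succ_apply' g, ih, hcan1]
  have hcanit2 : ∀ t x, g'^[t] (g^[t] x) = x := by
    intro t
    induction t with
    | zero => simp
    | succ t ih =>
      intro x
      rw [Function.iterate_succ_apply g, Function.iterate_succ_apply' g', ih, hcan2]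
  -- conjugation
  have hconj : ∀ t x, q (g^[t] x) = g'^[t] (q x) := by
    intro t
    induction t with
    | zero => simp
    | succ t ih =>
      intro x
      rw [Function.iterate_succ_apply g, ih, Function.iterate_succ_apply g']
      rfl
  -- existence of a period
  have hex : ∃ n, 0 < n ∧ g^[n] a = a := by
    obtain ⟨i, j, hij, hEq⟩ := Finite.exists_ne_map_eq_of_infinite (fun n : ℕ => g^[n] a)
    rcases hij.lt_or_gt with h | h
    · refine ⟨j - i, by omega, ?_⟩
      have : g^[i] (g^[j - i] a) = g^[i] a := by
        rw [← Function.iterate_add_apply]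
        have : i + (j - i) = j := by omega
        rw [this]
        exact hEq.symm
      exact Function.Injective.iterate hginj i this
    · refine ⟨i - j, by omega, ?_⟩
      have : g^[j] (g^[i - j] a) = g^[j] a := by
        rw [← Function.iterate_add_apply]
        have : j + (i - j) = i := by omega
        rw [this]
        exact hEq
      exact Function.Injective.iterate hginj j this
  set n : ℕ := Nat.find hex with hndef
  obtain ⟨hnpos, hun⟩ : 0 < n ∧ g^[n] a = a := Nat.find_spec hex
  have hnmin : ∀ m, 0 < m → g^[m] a = a → n ≤ m := by
    intro m hm hma
    exact Nat.find_le ⟨hm, hma⟩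
  set u : ℕ → V := fun k => g^[k] a with hu
  set v : ℕ → V := fun k => q (u k) with hv
  -- no q-edge inside the orbit start
  have hno_qa : ∀ m, q a ≠ g^[m] a := by
    intro m hqa
    rcases Nat.even_or_odd m with ⟨t, ht⟩ | ⟨t, ht⟩
    · -- m = t + t : q (g^[t] a) = g^[t] a
      have : q (g^[t] a) = g^[t] a := by
        rw [hconj t a, hqa, ht, Function.iterate_add_apply, hcanit2]
      exact hqne _ this
    · -- m = 2t+1 : q (g^[t] a) = g^[t+1] a, then p fixes g^[t+1] a
      have h1 : q (g^[t] a) = g^[t + 1] a := by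
        rw [hconj t a, hqa, ht]
        have : 2 * t + 1 = t + (t + 1) := by omega
        rw [this, Function.iterate_add_apply, hcanit2]
      have h2 : p (g^[t + 1] a) = g^[t + 1] a := by
        conv_lhs => rw [← h1]
        rw [Function.iterate_succ_apply' g]
        show p (q (g^[t] a)) = g (g^[t] a)
        rfl
      exact hpne _ h2
  have huv : ∀ j k, v j ≠ u k := by
    intro j k hjk
    have h1 : g'^[j] (q a) = g^[k] a := by
      rw [← hconj j a]
      exact hjk
    have h2 : q a = g^[j + k] a := by
      have := congrArg (g^[j]) h1
      rw [hcanit1, ← Function.iterate_add_apply] at this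
      exact this
    exact hno_qa (j + k) h2
  have hUinj : ∀ j k, j < n → k < n → u j = u k → j = k := by
    have key : ∀ j k, j ≤ k → k < n → u j = u k → j = k :=  by
      intro j k hjk hk he
      by_contra hne'
      have hjk' : j < k := by omega
      have : g^[j] (g^[k - j] a) = g^[j] a := by
        rw [← Function.iterate_add_apply]
        have : j + (k - j) = k := by omega
        rw [this]
        exact he.symm
      have h0 : g^[k - j] a = a := Function.Injective.iterate hginj j this
      have := hnmin (k - j) (by omega) h0
      omega
    intro j k hj hk he
    rcases le_total j k with h | h
    · exact key j k h hk he
    · exact (key k j h hj he.symm).symm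
  have hn2 : 2 ≤ n := by
    by_contra h
    have hn1 : n = 1 := by omega
    have hga : g a = a := by
      have := hun
      rw [hn1] at this
      simpa using this
    apply ha
    have h2 := congrArg p hga
    have h3 : p (g a) = q a := hpinv (q a)
    rw [h3] at h2
    exact h2.symm
  have hVinj : ∀ j k, v j = v k → u j = u k := by
    intro j k he
    have := congrArg q he
    simpa [hv, hqinv] using this
  have hUsucc : ∀ j k, u (j + 1) = u (k + 1) → u j = u k := by
    intro j k he
    rw [hu] at he ⊢
    simp only [Function.iterate_succ_apply' g] at he
    exact hginj he
  -- adjacency facts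
  have hGSle : G.deleteEdges S ≤ G := SimpleGraph.deleteEdges_le S
  have h1 : ∀ k, G.Adj (u k) (v k) := fun k => hGSle (hqadj (u k))
  have hpv : ∀ k, p (v k) = u (k + 1) := by
    intro k
    rw [hv, hu]
    simp only [Function.iterate_succ_apply' g]
    rfl
  have h2 : ∀ k, G.Adj (v k) (u (k + 1)) := by
    intro k
    rw [← hpv k]
    exact hpadj (v k)
  -- the walk
  have hu0 : u 0 = a := rfl
  set C : G.Walk a a := (buildWalk u v h1 h2 n).copy hu0 hun with hC
  have hCsupp : C.support = a :: (List.range n).flatMap (fun j => [v j, u (j + 1)]) := by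
    rw [hC, SimpleGraph.Walk.support_copy, buildWalk_support, hu0]
  have hCedges : C.edges = (List.range n).flatMap (fun j => [s(u j, v j), s(v j, u (j + 1))]) := by
    rw [hC, SimpleGraph.Walk.edges_copy, buildWalk_edges]
  -- distinctness facts
  have hUsucc1 : ∀ j, j < n → u j ≠ u (j + 1) := by
    intro j hj he
    by_cases hjn : j + 1 < n
    · have := hUinj j (j + 1) hj hjn he
      omega
    · have hj1 : j + 1 = n := by omega
      have hh : u (j + 1) = u 0 := by
        show g^[j+1] a = g^[0] a
        rw [hj1, hun]
        rfl
      rw [hh] at he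
      have := hUinj j 0 hj (by omega) he
      omega
  have hedge_ne : ∀ j k, j < n → k < n → s(u j, v j) ≠ s(v k, u (k + 1)) := by
    intro j k hj hk he
    rw [Sym2.eq_iff] at he
    rcases he with ⟨he1, he2⟩ | ⟨he1, he2⟩
    · exact huv k j he1.symm
    · have hjk := hUinj j k hj hk (hVinj j k he2)
      subst hjk
      exact hUsucc1 j hj he1
  have he1_inj : ∀ j k, j < n → k < n → s(u j, v j) = s(u k, v k) → j = k := by
    intro j k hj hk he
    rw [Sym2.eq_iff] at he
    rcases he with ⟨he1, he2⟩ | ⟨he1, he2⟩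
    · exact hUinj j k hj hk he1
    · exact absurd he1.symm (huv k j)
  have he2_inj : ∀ j k, j < n → k < n → s(v j, u (j + 1)) = s(v k, u (k + 1)) → j = k := by
    intro j k hj hk he
    rw [Sym2.eq_iff] at he
    rcases he with ⟨he1, he2⟩ | ⟨he1, he2⟩
    · exact hUinj j k hj hk (hVinj j k he1)
    · exact absurd he1 (huv j (k + 1))
  -- trail
  have hTrail : C.IsTrail := by
    rw [SimpleGraph.Walk.isTrail_def, hCedges, List.nodup_flatMap]
    constructor
    · intro j hj
      rw [List.mem_range] at hj
      simp only [List.nodup_cons, List.mem_singleton, List.not_mem_nil, not_false_iff,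
        List.nodup_nil, and_true, List.mem_cons]
      exact fun hh => hedge_ne j j hj hj (by simpa using hh)
    · rw [List.pairwise_iff_getElem]
      intro i j hi hj hij
      simp only [List.length_range] at hi hj
      simp only [List.getElem_range]
      intro e he1 he2
      simp only [Function.onFun, List.mem_cons, List.not_mem_nil, or_false,
        List.mem_singleton] at he1 he2
      rcases he1 with rfl | rfl
      · rcases he2 with he2 | he2
        · exact absurd (he1_inj i j hi hj he2) (by omega)
        · exact hedge_ne i j hi hj he2
      · rcases he2 with he2 | he2
        · exact hedge_ne j i hj hi he2.symm
        · exact absurd (he2_inj i j hi hj he2) (by omega)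
  -- not nil
  have hCne : C ≠ SimpleGraph.Walk.nil := by
    intro h
    have hmem : (s(u 0, v 0) : Sym2 V) ∈ C.edges := by
      rw [hCedges]
      exact List.mem_flatMap.2 ⟨0, List.mem_range.2 (by omega), by simp⟩
    rw [h] at hmem
    simp at hmem
  -- support nodup
  have hSuppNodup : C.support.tail.Nodup := by
    rw [hCsupp]
    simp only [List.tail_cons]
    rw [List.nodup_flatMap]
    constructor
    · intro j hj
      simp only [List.nodup_cons, List.mem_singleton, List.nodup_nil, and_true,
        List.not_mem_nil, not_false_iff, List.mem_cons, or_false]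
      exact fun hh => huv j (j + 1) hh
    · rw [List.pairwise_iff_getElem]
      intro i j hi hj hij
      simp only [List.length_range] at hi hj
      simp only [List.getElem_range]
      intro x hx1 hx2
      simp only [Function.onFun, List.mem_cons, List.not_mem_nil, or_false,
        List.mem_singleton] at hx1 hx2
      rcases hx1 with rfl | rfl
      · rcases hx2 with hx2 | hx2
        · exact absurd (hUinj i j hi hj (hVinj i j hx2)) (by omega)
        · exact huv i (j + 1) hx2
      · rcases hx2 with hx2 | hx2
        · exact huv j (i + 1) hx2.symm
        · have := hUinj i j hi hj (hUsucc i j hx2)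
          omega
  have hCycle : C.IsCycle := ⟨⟨hTrail, hCne⟩, hSuppNodup⟩
  -- the M-edges along the cycle
  have he2M : ∀ j, s(v j, u (j + 1)) ∈ M := by
    intro j
    rw [← hpv j]
    exact hpM (v j)
  have hAlt : ∀ w ∈ C.support, ∃! e, e ∈ C.edges ∧ e ∈ M ∧ w ∈ e := by
    intro w hw
    have hmm : ∃ j, j < n ∧ w ∈ (s(v j, u (j + 1)) : Sym2 V) := by
      rw [hCsupp] at hw
      rcases List.mem_cons.1 hw with rfl | hw'
      · refine ⟨n - 1, by omega, ?_⟩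
        have hh : u (n - 1 + 1) = w := by
          show g^[n - 1 + 1] w = w
          have : n - 1 + 1 = n := by omega
          rw [this, hun]
        rw [hh]
        exact Sym2.mem_mk_right _ _
      · obtain ⟨j, hj, hwj⟩ := List.mem_flatMap.1 hw'
        rw [List.mem_range] at hj
        simp only [List.mem_cons, List.not_mem_nil, or_false, List.mem_singleton] at hwj
        rcases hwj with rfl | rfl
        · exact ⟨j, hj, Sym2.mem_mk_left _ _⟩
        · exact ⟨j, hj, Sym2.mem_mk_right _ _⟩
    obtain ⟨j, hj, hwj⟩ := hmm
    refine ⟨s(v j, u (j + 1)), ⟨?_, he2M j, hwj⟩, ?_⟩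
    · rw [hCedges]
      exact List.mem_flatMap.2 ⟨j, List.mem_range.2 hj, by simp⟩
    · rintro e ⟨-, heM, hwe⟩
      rw [hpuniq w e heM hwe, ← hpuniq w _ (he2M j) hwj]
  -- apply the hypothesis to get a contradiction
  obtain ⟨e, heS, heC⟩ := hyp a C ⟨hCycle, hAlt⟩
  rw [hCedges] at heC
  obtain ⟨j, hj, hej⟩ := List.mem_flatMap.1 heC
  simp only [List.mem_cons, List.not_mem_nil, or_false, List.mem_singleton] at hej
  rcases hej with rfl | rfl
  · have hmem : s(u j, v j) ∈ (G.deleteEdges S).edgeSet := hM'pm.1 (hqM (u j))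
    rw [SimpleGraph.edgeSet_deleteEdges] at hmem
    exact hmem.2 heS
  · exact hMS _ (he2M j) heS

/-- Let `M` be a perfect matching of `G` and `S` a set of edges of `G` with
`S ∩ M = ∅`.  Then `S` is an anti-forcing set of `M` if and only if `S` contains
at least one edge of every `M`-alternating cycle of `G`. -/
theorem statement_3 {V : Type*} [Fintype V] (G : SimpleGraph V) (M S : Set (Sym2 V))
    (hM : IsPM G M) (hS : S ⊆ G.edgeSet) (hSM : S ∩ M = ∅) :
    IsAntiForcingSet G M S ↔
      ∀ (a : V) (C : G.Walk a a), IsAltCycle G M C → ∃ e ∈ S, e ∈ C.edges := by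
  constructor
  · exact fun haf => forward_dir G M S hM hSM haf
  · exact fun hyp => backward_dir G M S hM hS hSM hyp
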